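/- For all complex numbers s, t, u with Re s > 1, Re t > 1 and Re u > 1, one has T(s,t,u) = ∫_0^1 F(s,a) F(t,a) F(u,1−a) da, where for each a ∈ (0,1) the three series defining F converge. -/

import Mathlib

open Real Complex

/-- The Tornheim double zeta function, as a double series over positive integers. -/
noncomputable def tornheim (s t u : ℂ) : ℂ :=
  ∑' p : ℕ+ × ℕ+, 1 / ((p.1 : ℂ) ^ s * (p.2 : ℂ) ^ t * ((p.1 : ℂ) + (p.2 : ℂ)) ^ u)

/-- The symmetric Tornheim double zeta function `S₁`. -/
noncomputable def S₁ (s t u : ℂ) : ℂ :=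
  (1 + exp (-π * I * (s + t + u))) * tornheim s t u
    + (exp (-π * I * s) + exp (-π * I * (t + u))) * tornheim u s t
    + (exp (-π * I * t) + exp (-π * I * (u + s))) * tornheim t u s

/-- The symmetric Tornheim double zeta function `S₂`. -/
noncomputable def S₂ (s t u : ℂ) : ℂ :=
  (exp (-π * I * u) + exp (-π * I * (s + t))) * tornheim s t u
    + (exp (-π * I * t) + exp (-π * I * (u + s))) * tornheim u s t
    + (exp (-π * I * s) + exp (-π * I * (t + u))) * tornheim t u s

/-- The symmetric Tornheim double zeta function `S₃`. -/
noncomputable def S₃ (s t u : ℂ) : ℂ :=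
  tornheim s t u + tornheim u s t + tornheim t u s

/-- The symmetric Tornheim double zeta function `S₄`. -/
noncomputable def S₄ (s t u : ℂ) : ℂ :=
  -tornheim s t u + tornheim u s t + tornheim t u s


/-- The periodic zeta function `F(s,a) = Σ_{n≥1} e^{2πina}/n^s`. -/
noncomputable def periodicZeta (s : ℂ) (a : ℝ) : ℂ :=
  ∑' n : ℕ+, Complex.exp (2 * π * I * n * a) / (n : ℂ) ^ s

namespace TornheimAux

open MeasureTheory

/-- The general term of the periodic zeta function. -/
noncomputable def term (s : ℂ) (a : ℝ) (n : ℕ+) : ℂ :=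
  Complex.exp (2 * π * I * n * a) / (n : ℂ) ^ s

lemma norm_term (s : ℂ) (a : ℝ) (n : ℕ+) :
    ‖term s a n‖ = ((n : ℕ) : ℝ) ^ (-s.re) := by
  unfold term
  rw [norm_div, Complex.norm_exp]
  have h1 : (2 * (π:ℂ) * I * n * a).re = 0 := by simp
  have h2 : ‖(n:ℂ)^s‖ = ((n:ℕ):ℝ) ^ s.re := by
    rw [show ((n:ℕ+):ℂ) = ((((n:ℕ):ℝ)):ℂ) by push_cast; ring]
    exact Complex.norm_cpow_eq_rpow_re_of_pos (by positivity) s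
  rw [h1, h2, Real.exp_zero, Real.rpow_neg (by positivity), one_div]

lemma summable_norm_term (s : ℂ) (hs : 1 < s.re) (a : ℝ) :
    Summable fun n : ℕ+ => ‖term s a n‖ := by
  simp_rw [norm_term]
  exact ((Real.summable_nat_rpow.mpr (by linarith)).comp_injective
    (fun m n h => PNat.coe_injective h))

lemma summable_term (s : ℂ) (hs : 1 < s.re) (a : ℝ) : Summable (term s a) :=
  (summable_norm_term s hs a).of_norm

lemma key_integral (m n k : ℕ+) :
    (∫ a in (0:ℝ)..1, Complex.exp (2*π*I*m*a) * Complex.exp (2*π*I*n*a) *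
      Complex.exp (2*π*I*k*((1-a : ℝ):ℂ))) = if (m:ℕ) + n = k then 1 else 0 := by
  have hexp1 : ∀ d : ℤ, Complex.exp (2*π*I*(d:ℂ)) = 1 := by
    intro d
    rw [show 2*(π:ℂ)*I*(d:ℂ) = (d:ℂ) * (2*π*I) by ring]
    exact Complex.exp_int_mul_two_pi_mul_I _
  have hcomb : ∀ a : ℝ, Complex.exp (2*π*I*m*a) * Complex.exp (2*π*I*n*a) *
      Complex.exp (2*π*I*k*((1-a : ℝ):ℂ)) =
      Complex.exp ((2*π*I*((m:ℂ)+n-k)) * a) := by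
    intro a
    rw [← Complex.exp_add, ← Complex.exp_add]
    have h1 : 2*(π:ℂ)*I*m*a + 2*π*I*n*a + 2*π*I*k*((1-a : ℝ):ℂ)
        = (2*π*I*((m:ℂ)+n-k)) * a + 2*π*I*(((k:ℤ)):ℂ) := by
      push_cast; ring
    rw [h1, Complex.exp_add, hexp1, mul_one]
  simp_rw [hcomb]
  by_cases h : (m:ℕ) + n = k
  · have hz : (2*(π:ℂ)*I*((m:ℂ)+n-k)) = 0 := by
      have h' : ((m:ℂ)+n-k) = 0 := by
        have : ((k:ℕ):ℂ) = ((m:ℕ):ℂ) + ((n:ℕ):ℂ) := by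
          exact_mod_cast congrArg (fun x : ℕ => (x:ℂ)) h.symm
        push_cast at this ⊢
        rw [this]; ring
      rw [h', mul_zero]
    simp [hz, h]
  · have hd : ((m:ℤ) + n - k : ℤ) ≠ 0 := by
      intro hc; apply h; omega
    have hcast : ((m:ℂ)+n-k) = (((m:ℤ)+n-k : ℤ) : ℂ) := by push_cast; ring
    have h2pi : (2*(π:ℂ)*I) ≠ 0 := by
      simp [Real.pi_ne_zero, Complex.I_ne_zero]
    have hc : (2*(π:ℂ)*I*((m:ℂ)+n-k)) ≠ 0 := by
      rw [hcast]
      exact mul_ne_zero h2pi (Int.cast_ne_zero.mpr hd)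
    rw [integral_exp_mul_complex hc, Complex.ofReal_one, Complex.ofReal_zero, mul_one, mul_zero,
      Complex.exp_zero, hcast, hexp1, sub_self, zero_div, if_neg h]

lemma integral_term (s t u : ℂ) (m n k : ℕ+) :
    (∫ a in (0:ℝ)..1, term s a m * term t a n * term u (1-a) k)
      = if (m:ℕ) + n = k then 1/((m:ℂ)^s * (n:ℂ)^t * (k:ℂ)^u) else 0 := by
  have h : ∀ a : ℝ, term s a m * term t a n * term u (1-a) k
      = (1/((m:ℂ)^s * (n:ℂ)^t * (k:ℂ)^u)) *
        (Complex.exp (2*π*I*m*a) * Complex.exp (2*π*I*n*a) *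
          Complex.exp (2*π*I*k*((1-a:ℝ):ℂ))) := by
    intro a; unfold term; ring
  simp_rw [h]
  rw [intervalIntegral.integral_const_mul, key_integral]
  split <;> simp

lemma continuous_term3 (s t u : ℂ) (m n k : ℕ+) :
    Continuous fun a : ℝ => term s a m * term t a n * term u (1-a) k := by
  unfold term
  fun_prop

lemma tornheim_collapse (s t u : ℂ) :
    (∑' q : (ℕ+ × ℕ+) × ℕ+,
      if ((q.1.1:ℕ) + q.1.2 = q.2) then 1/((q.1.1:ℂ)^s * (q.1.2:ℂ)^t * (q.2:ℂ)^u) else 0)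
    = tornheim s t u := by
  rw [tornheim]
  set f : (ℕ+ × ℕ+) × ℕ+ → ℂ := fun q =>
    if ((q.1.1:ℕ) + q.1.2 = q.2) then 1/((q.1.1:ℂ)^s * (q.1.2:ℂ)^t * (q.2:ℂ)^u) else 0 with hf
  set g : ℕ+ × ℕ+ → (ℕ+ × ℕ+) × ℕ+ := fun p => (p, p.1 + p.2) with hg
  have hinj : Function.Injective g := by
    intro p q h
    exact (Prod.ext_iff.1 h).1
  have hsupp : Function.support f ⊆ Set.range g := by
    intro q hq
    simp only [Function.mem_support, hf] at hq
    by_cases h : (q.1.1:ℕ) + q.1.2 = q.2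
    · refine ⟨q.1, ?_⟩
      have : q.1.1 + q.1.2 = q.2 := PNat.coe_injective (by push_cast; exact_mod_cast h)
      simp [hg, this]
    · simp [h] at hq
  rw [← Function.Injective.tsum_eq hinj hsupp]
  apply tsum_congr
  intro p
  have hcond : ((p.1:ℕ) + p.2 : ℕ) = ((p.1 + p.2 : ℕ+) : ℕ) := by
    simp
  have hcast : (((p.1 + p.2 : ℕ+) : ℕ) : ℂ) = (p.1 : ℂ) + (p.2 : ℂ) := by
    push_cast; ring
  simp only [hf, hg, if_pos hcond, hcast]

end TornheimAux

open TornheimAux MeasureTheory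

theorem tornheim_integral_repr (s t u : ℂ) (hs : 1 < s.re) (ht : 1 < t.re) (hu : 1 < u.re) :
    (∀ a : ℝ, a ∈ Set.Ioo (0 : ℝ) 1 →
      Summable (fun n : ℕ+ => Complex.exp (2 * π * I * n * a) / (n : ℂ) ^ s) ∧
      Summable (fun n : ℕ+ => Complex.exp (2 * π * I * n * a) / (n : ℂ) ^ t) ∧
      Summable (fun n : ℕ+ => Complex.exp (2 * π * I * n * (1 - a : ℝ)) / (n : ℂ) ^ u)) ∧
    tornheim s t u
      = ∫ a in (0 : ℝ)..1, periodicZeta s a * periodicZeta t a * periodicZeta u (1 - a) := by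
  refine ⟨fun a _ => ⟨summable_term s hs a, summable_term t ht a, summable_term u hu (1-a)⟩, ?_⟩
  have hPZ : ∀ (v : ℂ) (a : ℝ), periodicZeta v a = ∑' n : ℕ+, term v a n := fun _ _ => rfl
  -- Step 1: pointwise expansion of the integrand into a triple series
  have hpt : ∀ a : ℝ, periodicZeta s a * periodicZeta t a * periodicZeta u (1-a)
      = ∑' q : (ℕ+ × ℕ+) × ℕ+, term s a q.1.1 * term t a q.1.2 * term u (1-a) q.2 := by
    intro a
    have h1 := summable_norm_term s hs a
    have h2 := summable_norm_term t ht a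
    have h3 := summable_norm_term u hu (1-a)
    rw [hPZ, hPZ, hPZ, tsum_mul_tsum_of_summable_norm h1 h2,
      tsum_mul_tsum_of_summable_norm (h1.mul_norm h2) h3]
  rw [intervalIntegral.integral_congr (g := fun a =>
      ∑' q : (ℕ+ × ℕ+) × ℕ+, term s a q.1.1 * term t a q.1.2 * term u (1-a) q.2)
      (fun a _ => hpt a)]
  -- Step 2: exchange the integral and the sum
  have hInt : ∀ q : (ℕ+ × ℕ+) × ℕ+,
      Integrable (fun a : ℝ => term s a q.1.1 * term t a q.1.2 * term u (1-a) q.2)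
        (volume.restrict (Set.Ioc (0:ℝ) 1)) := by
    intro q
    exact (continuous_term3 s t u q.1.1 q.1.2 q.2).integrableOn_Ioc
  have hnorm : ∀ (q : (ℕ+ × ℕ+) × ℕ+) (a : ℝ),
      ‖term s a q.1.1 * term t a q.1.2 * term u (1-a) q.2‖
      = ((q.1.1:ℕ):ℝ)^(-s.re) * ((q.1.2:ℕ):ℝ)^(-t.re) * ((q.2:ℕ):ℝ)^(-u.re) := by
    intro q a
    rw [norm_mul, norm_mul, norm_term, norm_term, norm_term]
  have hSum : Summable (fun q : (ℕ+ × ℕ+) × ℕ+ =>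
      ∫ a in Set.Ioc (0:ℝ) 1, ‖term s a q.1.1 * term t a q.1.2 * term u (1-a) q.2‖) := by
    have hcalc : ∀ q : (ℕ+ × ℕ+) × ℕ+,
        (∫ a in Set.Ioc (0:ℝ) 1, ‖term s a q.1.1 * term t a q.1.2 * term u (1-a) q.2‖)
        = ((q.1.1:ℕ):ℝ)^(-s.re) * ((q.1.2:ℕ):ℝ)^(-t.re) * ((q.2:ℕ):ℝ)^(-u.re) := by
      intro q
      simp_rw [hnorm q]
      rw [setIntegral_const]
      simp
    rw [funext hcalc]
    have hA : Summable (fun n : ℕ+ => ((n:ℕ):ℝ)^(-s.re)) :=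
      (Real.summable_nat_rpow.mpr (by linarith)).comp_injective
        (fun m n h => PNat.coe_injective h)
    have hB : Summable (fun n : ℕ+ => ((n:ℕ):ℝ)^(-t.re)) :=
      (Real.summable_nat_rpow.mpr (by linarith)).comp_injective
        (fun m n h => PNat.coe_injective h)
    have hC : Summable (fun n : ℕ+ => ((n:ℕ):ℝ)^(-u.re)) :=
      (Real.summable_nat_rpow.mpr (by linarith)).comp_injective
        (fun m n h => PNat.coe_injective h)
    have hAB := hA.mul_of_nonneg hB (fun n => by positivity) (fun n => by positivity)
    exact hAB.mul_of_nonneg hC (fun p => by positivity) (fun n => by positivity)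
  rw [intervalIntegral.integral_of_le zero_le_one,
    ← integral_tsum_of_summable_integral_norm hInt hSum]
  -- Step 3: compute each integral and collapse the triple sum
  rw [← tornheim_collapse s t u]
  apply tsum_congr
  intro q
  rw [← intervalIntegral.integral_of_le zero_le_one, integral_term]
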